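/- The canonical projection π : D_H → H defined by π(f ⊗ x) = x(1) f is a bialgebra homomorphism: π is a unital algebra homomorphism from the tensor product algebra D_H = H ⊗ H* to H, and it satisfies (π ⊗ π) ∘ Δ_D = Δ ∘ π and ε ∘ π = ε_D. -/

import Mathlib

set_option synthInstance.maxHeartbeats 1000000
set_option maxHeartbeats 1000000


open scoped TensorProduct

noncomputable section

variable (k H : Type*) [Field k] [Ring H] [HopfAlgebra k H]

/-- The convolution product on the linear dual `H*` of `H`, as a linear map
`H* ⊗ H* → H*`: it sends `x ⊗ y` to `a ↦ x(a_(1)) y(a_(2))`. -/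
def convL : Module.Dual k H ⊗[k] Module.Dual k H →ₗ[k] Module.Dual k H :=
  LinearMap.lcomp k k (Coalgebra.comul (R := k) (A := H)) ∘ₗ
    TensorProduct.dualDistrib k H H

/-- The multiplication of the tensor product algebra `D_H = H ⊗ H*`, where `H*` carries
the convolution product: `(f ⊗ x)(g ⊗ y) = fg ⊗ (x · y)`. -/
def mulD : (H ⊗[k] Module.Dual k H) ⊗[k] (H ⊗[k] Module.Dual k H) →ₗ[k]
    H ⊗[k] Module.Dual k H :=
  TensorProduct.map (LinearMap.mul' k H) (convL k H) ∘ₗ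
    (TensorProduct.tensorTensorTensorComm k H (Module.Dual k H) H
      (Module.Dual k H)).toLinearMap

/-- The unit `1 ⊗ ε` of the tensor product algebra `D_H = H ⊗ H*`. -/
def oneD : H ⊗[k] Module.Dual k H :=
  (1 : H) ⊗ₜ[k] (Coalgebra.counit (R := k) (A := H))

/-- The counit `ε_D(f ⊗ x) = ε(f) x(1)` of the Drinfeld codouble `D_H = H ⊗ H*`. -/
def epsD : H ⊗[k] Module.Dual k H →ₗ[k] k :=
  LinearMap.mul' k k ∘ₗ
    TensorProduct.map (Coalgebra.counit (R := k) (A := H))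
      (LinearMap.applyₗ (1 : H) : Module.Dual k H →ₗ[k] k)

variable {k H}

/-- The element `w = Σ_j e_j ⊗ e^j ∈ H ⊗ H*`. -/
def wElem {n : ℕ} (b : Module.Basis (Fin n) k H) : H ⊗[k] Module.Dual k H :=
  ∑ j : Fin n, b j ⊗ₜ[k] b.coord j

/-- The element `w⁻¹ = (S ⊗ id)(w) = Σ_j S(e_j) ⊗ e^j ∈ H ⊗ H*`. -/
def wElemInv {n : ℕ} (b : Module.Basis (Fin n) k H) : H ⊗[k] Module.Dual k H :=
  ∑ j : Fin n, HopfAlgebra.antipode (R := k) (b j) ⊗ₜ[k] b.coord j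

/-- Conjugation `Ad(w)(z) = w z w⁻¹` by `w` in the tensor product algebra `H ⊗ H*`. -/
def adW {n : ℕ} (b : Module.Basis (Fin n) k H) :
    H ⊗[k] Module.Dual k H →ₗ[k] H ⊗[k] Module.Dual k H :=
  mulD k H ∘ₗ
    TensorProduct.mk k (H ⊗[k] Module.Dual k H) (H ⊗[k] Module.Dual k H) (wElem b) ∘ₗ
    mulD k H ∘ₗ
    (TensorProduct.mk k (H ⊗[k] Module.Dual k H) (H ⊗[k] Module.Dual k H)).flip
      (wElemInv b)

/-- The comultiplication `Δ_D = (id ⊗ σ ⊗ id) ∘ (id ⊗ Ad(w) ⊗ id) ∘ (Δ ⊗ Δ̂)` of the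
Drinfeld codouble `D_H = H ⊗ H*`, where `Δ̂` is the comultiplication of `(H*)^cop` and
`σ` is the flip map. -/
def deltaD {n : ℕ} (b : Module.Basis (Fin n) k H)
    (Δhat : Module.Dual k H →ₗ[k] Module.Dual k H ⊗[k] Module.Dual k H) :
    H ⊗[k] Module.Dual k H →ₗ[k]
      (H ⊗[k] Module.Dual k H) ⊗[k] (H ⊗[k] Module.Dual k H) :=
  (TensorProduct.assoc k H (Module.Dual k H) (H ⊗[k] Module.Dual k H)).symm.toLinearMap ∘ₗ
    TensorProduct.map (LinearMap.id : H →ₗ[k] H)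
      (TensorProduct.assoc k (Module.Dual k H) H (Module.Dual k H)).toLinearMap ∘ₗ
    TensorProduct.map (LinearMap.id : H →ₗ[k] H)
      (TensorProduct.map (TensorProduct.comm k H (Module.Dual k H)).toLinearMap
        (LinearMap.id : Module.Dual k H →ₗ[k] Module.Dual k H)) ∘ₗ
    TensorProduct.map (LinearMap.id : H →ₗ[k] H)
      (TensorProduct.map (adW b)
        (LinearMap.id : Module.Dual k H →ₗ[k] Module.Dual k H)) ∘ₗ
    TensorProduct.map (LinearMap.id : H →ₗ[k] H)
      (TensorProduct.assoc k H (Module.Dual k H) (Module.Dual k H)).symm.toLinearMap ∘ₗ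
    (TensorProduct.assoc k H H (Module.Dual k H ⊗[k] Module.Dual k H)).toLinearMap ∘ₗ
    TensorProduct.map (Coalgebra.comul (R := k) (A := H)) Δhat

variable (k H)

/-- The canonical projection `π : D_H → H`, `π(f ⊗ x) = x(1) f`. -/
def piD : H ⊗[k] Module.Dual k H →ₗ[k] H :=
  (TensorProduct.rid k H).toLinearMap ∘ₗ
    TensorProduct.map (LinearMap.id : H →ₗ[k] H)
      (LinearMap.applyₗ (1 : H) : Module.Dual k H →ₗ[k] k)


section Aux

variable {k H}

lemma piD_tmul (f : H) (x : Module.Dual k H) : piD k H (f ⊗ₜ[k] x) = x 1 • f := by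
  simp [piD]

lemma convL_apply_one (x y : Module.Dual k H) : convL k H (x ⊗ₜ[k] y) 1 = x 1 * y 1 := by
  simp [convL, Algebra.TensorProduct.one_def]

lemma mulD_tmul (f g : H) (x y : Module.Dual k H) :
    mulD k H ((f ⊗ₜ[k] x) ⊗ₜ[k] (g ⊗ₜ[k] y)) = (f * g) ⊗ₜ[k] convL k H (x ⊗ₜ[k] y) := by
  simp [mulD]

lemma piD_mul (z z' : H ⊗[k] Module.Dual k H) :
    piD k H (mulD k H (z ⊗ₜ[k] z')) = piD k H z * piD k H z' := by
  induction z using TensorProduct.induction_on with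
  | zero => simp [TensorProduct.zero_tmul]
  | tmul f x =>
    induction z' using TensorProduct.induction_on with
    | zero => simp [TensorProduct.tmul_zero]
    | tmul g y =>
      rw [mulD_tmul, piD_tmul, piD_tmul, piD_tmul, convL_apply_one,
        smul_mul_assoc, mul_smul_comm, smul_smul]
    | add u v hu hv => simp only [TensorProduct.tmul_add, map_add, hu, hv, mul_add]
  | add u v hu hv => simp only [TensorProduct.add_tmul, map_add, hu, hv, add_mul]

lemma piD_oneD : piD k H (oneD k H) = 1 := by
  simp [oneD, piD_tmul]

lemma antipode_one' : HopfAlgebra.antipode (R := k) (1 : H) = 1 := by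
  have h := HopfAlgebra.mul_antipode_rTensor_comul_apply (R := k) (A := H) (a := 1)
  simpa [Algebra.TensorProduct.one_def] using h

lemma piD_wElem {n : ℕ} (b : Module.Basis (Fin n) k H) : piD k H (wElem b) = 1 := by
  rw [wElem, map_sum]
  simp only [piD_tmul, Module.Basis.coord_apply]
  exact b.sum_repr 1

lemma piD_wElemInv {n : ℕ} (b : Module.Basis (Fin n) k H) : piD k H (wElemInv b) = 1 := by
  rw [wElemInv, map_sum]
  simp only [piD_tmul, Module.Basis.coord_apply, ← map_smul]
  rw [← map_sum, b.sum_repr 1, antipode_one']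

lemma piD_adW {n : ℕ} (b : Module.Basis (Fin n) k H) (z : H ⊗[k] Module.Dual k H) :
    piD k H (adW b z) = piD k H z := by
  simp only [adW, LinearMap.comp_apply, LinearMap.flip_apply, TensorProduct.mk_apply]
  rw [piD_mul, piD_mul, piD_wElem, piD_wElemInv, one_mul, mul_one]

lemma Mkey (f₁ : H) (x₂ : Module.Dual k H) (A : H ⊗[k] Module.Dual k H) :
    TensorProduct.map (piD k H) (piD k H)
      ((TensorProduct.assoc k H (Module.Dual k H) (H ⊗[k] Module.Dual k H)).symm
        (f₁ ⊗ₜ[k]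
          (TensorProduct.assoc k (Module.Dual k H) H (Module.Dual k H))
            ((TensorProduct.comm k H (Module.Dual k H)) A ⊗ₜ[k] x₂)))
      = x₂ 1 • (f₁ ⊗ₜ[k] piD k H A) := by
  induction A using TensorProduct.induction_on with
  | zero => simp
  | tmul u ξ =>
    simp [piD_tmul, TensorProduct.smul_tmul, TensorProduct.tmul_smul, smul_smul, mul_comm]
  | add u v hu hv =>
    simp only [TensorProduct.add_tmul, TensorProduct.tmul_add, map_add, hu, hv,
      smul_add, TensorProduct.tmul_add]

end Aux

/-- The canonical projection `π : D_H → H`, `π(f ⊗ x) = x(1) f`, is a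
bialgebra homomorphism: it is a unital algebra homomorphism from the tensor product
algebra `D_H = H ⊗ H*` to `H` and satisfies `(π ⊗ π) ∘ Δ_D = Δ ∘ π` and `ε ∘ π = ε_D`.
Here `Δ̂` is the comultiplication of `(H*)^cop`, characterized by `Δ̂(x)(a ⊗ b) = x(ba)`. -/
theorem drinfeld_codouble_projection_first_factor
    {k H : Type*} [Field k] [Ring H] [HopfAlgebra k H] {n : ℕ} (b : Module.Basis (Fin n) k H)
    (Δhat : Module.Dual k H →ₗ[k] Module.Dual k H ⊗[k] Module.Dual k H)
    (hΔhat : ∀ (x : Module.Dual k H) (a c : H),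
      TensorProduct.dualDistrib k H H (Δhat x) (a ⊗ₜ[k] c) = x (c * a)) :
    (∀ z z' : H ⊗[k] Module.Dual k H,
      piD k H (mulD k H (z ⊗ₜ[k] z')) = piD k H z * piD k H z') ∧
    (piD k H (oneD k H) = 1) ∧
    (TensorProduct.map (piD k H) (piD k H) ∘ₗ deltaD b Δhat
      = Coalgebra.comul (R := k) (A := H) ∘ₗ piD k H) ∧
    (Coalgebra.counit (R := k) (A := H) ∘ₗ piD k H = epsD k H) := by
  refine ⟨piD_mul, piD_oneD, ?_, ?_⟩
  · apply TensorProduct.ext'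
    intro f x
    have hx : x 1 = TensorProduct.dualDistrib k H H (Δhat x) ((1 : H) ⊗ₜ[k] (1 : H)) := by
      simpa using (hΔhat x 1 1).symm
    simp only [LinearMap.comp_apply, deltaD, TensorProduct.map_tmul,
      LinearEquiv.coe_coe, piD_tmul, map_smul, hx]
    generalize (Coalgebra.comul (R := k) (A := H)) f = u
    generalize Δhat x = v
    induction u using TensorProduct.induction_on with
    | zero => simp [TensorProduct.zero_tmul]
    | tmul f₁ f₂ =>
      induction v using TensorProduct.induction_on with
      | zero => simp [TensorProduct.tmul_zero]
      | tmul x₁ x₂ =>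
        rw [TensorProduct.assoc_tmul]
        simp only [TensorProduct.map_tmul, LinearMap.id_coe, id_eq, LinearEquiv.coe_coe,
          TensorProduct.assoc_symm_tmul]
        rw [Mkey, piD_adW, piD_tmul]
        simp [TensorProduct.tmul_smul, smul_smul, mul_comm]
      | add v₁ v₂ h₁ h₂ =>
        simp only [TensorProduct.tmul_add, map_add, h₁, h₂, LinearMap.add_apply, add_smul]
    | add u₁ u₂ h₁ h₂ =>
      simp only [TensorProduct.add_tmul, map_add, h₁, h₂, smul_add]
  · apply TensorProduct.ext'
    intro f x
    simp [piD_tmul, epsD, LinearMap.mul'_apply, mul_comm, smul_eq_mul]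


end
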